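/- Let Γ be a group with representation ρ: Γ → GL(𝔽^d), and (G=(V,E),ψ) a Γ-gain graph. With A_{e,ψ} ⊆ (𝔽^d)^V as the canonical subspaces (x(i)+ρ(ψ(e))x(j)=0 and supported on {i,j} for non-loops; x(i) ∈ image(I_d−ρ(ψ(e))) supported on {i} for loops), one has dim_𝔽 span{A_{e,ψ} : e ∈ E} = d·|V(E)| − d·c(E) + Σ_{X ∈ C(E)} d_ρ(⟨X⟩), where d_ρ(⟨X⟩) = dim_𝔽 span{image(I_d − ρ(γ)) : γ ∈ ⟨X⟩_{ψ,v}} for a base vertex v in the component X. -/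

import Mathlib

/-- A directed multigraph: edges with a source and target map. -/
structure GG (V E : Type*) where
  src : E → V
  tgt : E → V

namespace GG

variable {V E : Type*}

/-- The initial vertex of a step (an edge together with a direction). -/
def stepHead (G : GG V E) (s : E × Bool) : V := if s.2 then G.src s.1 else G.tgt s.1

/-- The final vertex of a step. -/
def stepLast (G : GG V E) (s : E × Bool) : V := if s.2 then G.tgt s.1 else G.src s.1

/-- Walks from `u` to `w` using only edges of `X`. -/
inductive IsWalkFrom (G : GG V E) (X : Set E) : V → V → List (E × Bool) → Prop
  | nil (v : V) : IsWalkFrom G X v v []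
  | cons {u w : V} {s : E × Bool} {l : List (E × Bool)} (he : s.1 ∈ X)
      (h1 : G.stepHead s = u) (hl : IsWalkFrom G X (G.stepLast s) w l) :
      IsWalkFrom G X u w (s :: l)

variable {Γ : Type*} [Group Γ]

/-- The gain of a walk: the product of the edge gains, inverted on backward edges. -/
def gainOf (ψ : E → Γ) : List (E × Bool) → Γ
  | [] => 1
  | s :: l => (if s.2 then ψ s.1 else (ψ s.1)⁻¹) * gainOf ψ l

/-- `⟨X⟩_{ψ,v}`: the subgroup generated by gains of closed walks at `v` using edges of `X`. -/
def walkGroup (G : GG V E) (ψ : E → Γ) (X : Set E) (v : V) : Subgroup Γ :=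
  Subgroup.closure {g : Γ | ∃ l, G.IsWalkFrom X v v l ∧ gainOf ψ l = g}

open Classical in
/-- The switching of the gain function `ψ` at vertex `v` with `γ`. -/
noncomputable def switch (G : GG V E) (ψ : E → Γ) (v : V) (γ : Γ) : E → Γ :=
  fun e => (if G.src e = v then γ else 1) * ψ e * (if G.tgt e = v then γ⁻¹ else 1)

/-- Two gain functions are equivalent if one is obtained from the other by a
finite sequence of switchings. -/
def Equivalent (G : GG V E) (ψ ψ' : E → Γ) : Prop :=
  Relation.ReflTransGen (fun a b => ∃ v γ, b = G.switch a v γ) ψ ψ'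

end GG

open GG

variable {𝔽 : Type*} [Field 𝔽] {d : ℕ}

open Classical in
/-- The canonical subspace `A_{e,ψ}` of `(𝔽^d)^V` associated with an edge `e`:
for a non-loop `e=(i,j)` it is `{x : x(i) + ρ(ψ(e))x(j) = 0, x = 0 off {i,j}}`, and for
a loop at `i` it is `{x : x(i) ∈ image(I − ρ(ψ(e))), x = 0 off {i}}`. -/
noncomputable def Asub {V E Γ : Type*} [Group Γ] (G : GG V E)
    (ρ : Γ →* ((Fin d → 𝔽) ≃ₗ[𝔽] (Fin d → 𝔽))) (ψ : E → Γ) (e : E) :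
    Submodule 𝔽 (V → Fin d → 𝔽) :=
  if G.src e = G.tgt e then
    (Submodule.comap (LinearMap.proj (R := 𝔽) (φ := fun _ : V => Fin d → 𝔽) (G.src e))
        (LinearMap.range (LinearMap.id - (ρ (ψ e)).toLinearMap))) ⊓
      ⨅ v ∈ {v : V | v ≠ G.src e},
        LinearMap.ker (LinearMap.proj (R := 𝔽) (φ := fun _ : V => Fin d → 𝔽) v)
  else
    LinearMap.ker (LinearMap.proj (R := 𝔽) (φ := fun _ : V => Fin d → 𝔽) (G.src e) +
        (ρ (ψ e)).toLinearMap ∘ₗ LinearMap.proj (G.tgt e)) ⊓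
      ⨅ v ∈ {v : V | v ≠ G.src e ∧ v ≠ G.tgt e},
        LinearMap.ker (LinearMap.proj (R := 𝔽) (φ := fun _ : V => Fin d → 𝔽) v)

/-- `d_ρ(X) = dim_𝔽 span{ image(I − ρ(γ)) : γ ∈ X }`. -/
noncomputable def dRho {Γ : Type*} [Group Γ]
    (ρ : Γ →* ((Fin d → 𝔽) ≃ₗ[𝔽] (Fin d → 𝔽))) (X : Set Γ) : ℕ :=
  Module.finrank 𝔽
    ↥(⨆ γ ∈ X, LinearMap.range (LinearMap.id - (ρ γ).toLinearMap))

variable {V E Γ : Type*} [Group Γ] [Fintype V] [Fintype E] [DecidableEq V] [DecidableEq E]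

/-- The finset of endvertices of the edges of `F`. -/
def vertexFinset (G : GG V E) (F : Finset E) : Finset V :=
  F.image G.src ∪ F.image G.tgt

/-- Two edges of `F` lie in the same connected component of `F`. -/
def edgeCompRel (G : GG V E) (F : Finset E) (e f : {x // x ∈ F}) : Prop :=
  ∃ l, G.IsWalkFrom ↑F (G.src e.1) (G.src f.1) l

/-- `c(F)`: the number of connected components of the edge set `F`. -/
noncomputable def edgeNumComp (G : GG V E) (F : Finset E) : ℕ :=
  Nat.card (Quot (edgeCompRel G F))

/-- The connected component of `F` containing the edge `e`. -/
def edgeCompCl (G : GG V E) (F : Finset E) (e : E) : Set E :=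
  {f | f ∈ F ∧ ∃ l, G.IsWalkFrom ↑F (G.src e) (G.src f) l}


section WalkLemmas

variable {V E Γ : Type*} [Group Γ] {G : GG V E}

/-- Flip a step (reverse its direction). -/
def flipStep (s : E × Bool) : E × Bool := (s.1, !s.2)

lemma stepHead_flip (G : GG V E) (s : E × Bool) : G.stepHead (flipStep s) = G.stepLast s := by
  cases s with
  | mk e b => cases b <;> simp [flipStep, GG.stepHead, GG.stepLast]

lemma stepLast_flip (G : GG V E) (s : E × Bool) : G.stepLast (flipStep s) = G.stepHead s := by
  cases s with
  | mk e b => cases b <;> simp [flipStep, GG.stepHead, GG.stepLast]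

lemma walk_append {X : Set E} {u v w : V} {l l' : List (E × Bool)}
    (h : G.IsWalkFrom X u v l) (h' : G.IsWalkFrom X v w l') :
    G.IsWalkFrom X u w (l ++ l') := by
  induction h with
  | nil v => simpa using h'
  | cons he h1 hl ih => exact GG.IsWalkFrom.cons he h1 (ih h')

lemma walk_single {X : Set E} {s : E × Bool} (he : s.1 ∈ X) :
    G.IsWalkFrom X (G.stepHead s) (G.stepLast s) [s] :=
  GG.IsWalkFrom.cons he rfl (GG.IsWalkFrom.nil _)

lemma walk_reverse {X : Set E} {u v : V} {l : List (E × Bool)}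
    (h : G.IsWalkFrom X u v l) :
    G.IsWalkFrom X v u (l.reverse.map flipStep) := by
  induction h with
  | nil v => exact GG.IsWalkFrom.nil v
  | @cons u w s l he h1 hl ih =>
      have hs : G.IsWalkFrom X (G.stepLast s) u [flipStep s] := by
        have := walk_single (G := G) (s := flipStep s) (X := X) he
        rwa [stepHead_flip, stepLast_flip, h1] at this
      have := walk_append ih hs
      simpa using this

lemma gain_append (ψ : E → Γ) (l l' : List (E × Bool)) :
    gainOf ψ (l ++ l') = gainOf ψ l * gainOf ψ l' := by
  induction l with
  | nil => simp [GG.gainOf]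
  | cons s l ih => simp [GG.gainOf, ih, mul_assoc]

lemma gain_reverse (ψ : E → Γ) (l : List (E × Bool)) :
    gainOf ψ (l.reverse.map flipStep) = (gainOf ψ l)⁻¹ := by
  induction l with
  | nil => simp [GG.gainOf]
  | cons s l ih =>
      cases s with
      | mk e b =>
        simp only [List.reverse_cons, List.map_append, List.map_cons, List.map_nil,
          gain_append, ih, GG.gainOf]
        cases b <;> simp [flipStep, GG.gainOf]

end WalkLemmas

set_option linter.unusedSectionVars false
set_option linter.unusedVariables false

section CompLemmas

variable {V E Γ : Type*} [Group Γ] [Fintype V] [Fintype E] [DecidableEq V] [DecidableEq E]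
  {G : GG V E}

lemma mem_univ_coe (e : E) : e ∈ (↑(Finset.univ : Finset E) : Set E) := by simp

lemma walk_comp {e₀ : E} {u w : V} {l : List (E × Bool)}
    (h : G.IsWalkFrom ↑(Finset.univ : Finset E) u w l)
    (hp : ∃ p, G.IsWalkFrom ↑(Finset.univ : Finset E) (G.src e₀) u p) :
    G.IsWalkFrom (edgeCompCl G Finset.univ e₀) u w l := by
  induction h with
  | nil v => exact .nil v
  | @cons u w s l he h1 hl ih =>
    obtain ⟨p, hpw⟩ := hp
    have hstep : G.IsWalkFrom ↑(Finset.univ : Finset E) u (G.stepLast s) [s] := by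
      have := walk_single (G := G) (s := s) (mem_univ_coe s.1)
      rwa [h1] at this
    have hsrc : ∃ p', G.IsWalkFrom ↑(Finset.univ : Finset E) (G.src e₀) (G.src s.1) p' := by
      cases hb : s.2 with
      | true =>
        refine ⟨p, ?_⟩
        have : G.stepHead s = G.src s.1 := by simp [GG.stepHead, hb]
        rwa [← h1, this] at hpw
      | false =>
        have h2 : G.stepLast s = G.src s.1 := by simp [GG.stepLast, hb]
        exact ⟨p ++ [s], walk_append hpw (h2 ▸ hstep)⟩
    have hcl : s.1 ∈ edgeCompCl G Finset.univ e₀ := ⟨Finset.mem_univ _, hsrc⟩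
    exact .cons hcl h1 (ih ⟨p ++ [s], walk_append hpw hstep⟩)

lemma edgeCompRel_equiv : Equivalence (edgeCompRel G (Finset.univ : Finset E)) where
  refl e := ⟨[], .nil _⟩
  symm := fun ⟨l, hl⟩ => ⟨_, walk_reverse hl⟩
  trans := fun ⟨l, hl⟩ ⟨l', hl'⟩ => ⟨l ++ l', walk_append hl hl'⟩

lemma quot_mk_eq_iff (a b : {x // x ∈ (Finset.univ : Finset E)}) :
    Quot.mk (edgeCompRel G Finset.univ) a = Quot.mk (edgeCompRel G Finset.univ) b ↔
      edgeCompRel G Finset.univ a b := by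
  rw [Quot.eq, (edgeCompRel_equiv (G := G)).eqvGen_iff]

end CompLemmas

section Main

variable {𝔽 : Type*} [Field 𝔽] {d : ℕ} {V E Γ : Type*} [Group Γ] [Fintype V] [Fintype E]
  [DecidableEq V] [DecidableEq E]

variable (G : GG V E) (ρ : Γ →* ((Fin d → 𝔽) ≃ₗ[𝔽] (Fin d → 𝔽))) (ψ : E → Γ)

/-- Base vertex of the component `q`. -/
noncomputable def vbase (q : Quot (edgeCompRel G (Finset.univ : Finset E))) : V := G.src q.out.1

/-- `u` lies in the component `q`. -/
def Pcomp (q : Quot (edgeCompRel G (Finset.univ : Finset E))) (u : V) : Prop :=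
  ∃ l, G.IsWalkFrom ↑(Finset.univ : Finset E) (vbase G q) u l

open Classical in
/-- A chosen path gain from the base vertex of `q` to `u`. -/
noncomputable def gq (q : Quot (edgeCompRel G (Finset.univ : Finset E))) (u : V) : Γ :=
  if h : Pcomp G q u then gainOf ψ h.choose else 1

lemma gq_spec (q) (u : V) (h : Pcomp G q u) :
    ∃ l, G.IsWalkFrom ↑(Finset.univ : Finset E) (vbase G q) u l ∧ gainOf ψ l = gq G ψ q u :=
  ⟨h.choose, h.choose_spec, by rw [gq, dif_pos h]⟩

lemma Pcomp_base (q) : Pcomp G q (vbase G q) := ⟨[], .nil _⟩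

lemma Pcomp_unique {q q'} {u : V} (h : Pcomp G q u) (h' : Pcomp G q' u) : q = q' := by
  obtain ⟨l, hl⟩ := h
  obtain ⟨l', hl'⟩ := h'
  have hrel : edgeCompRel G Finset.univ q.out q'.out :=
    ⟨l ++ l'.reverse.map flipStep, walk_append hl (walk_reverse hl')⟩
  have := (quot_mk_eq_iff (G := G) q.out q'.out).mpr hrel
  rwa [Quot.out_eq, Quot.out_eq] at this

lemma vbase_inj {q q'} (h : vbase G q = vbase G q') : q = q' :=
  Pcomp_unique G (h ▸ Pcomp_base G q) (Pcomp_base G q')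

lemma src_mem_VF (e : E) : G.src e ∈ vertexFinset G Finset.univ := by
  simp [vertexFinset]

lemma tgt_mem_VF (e : E) : G.tgt e ∈ vertexFinset G Finset.univ := by
  simp [vertexFinset]

lemma walk_step_fwd (e : E) :
    G.IsWalkFrom ↑(Finset.univ : Finset E) (G.src e) (G.tgt e) [(e, true)] := by
  simpa [GG.stepHead, GG.stepLast] using
    walk_single (G := G) (s := (e, true)) (mem_univ_coe e)

lemma walk_step_bwd (e : E) :
    G.IsWalkFrom ↑(Finset.univ : Finset E) (G.tgt e) (G.src e) [(e, false)] := by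
  simpa [GG.stepHead, GG.stepLast] using
    walk_single (G := G) (s := (e, false)) (mem_univ_coe e)

lemma walk_end_mem_VF {X : Set E} {a b : V} {l : List (E × Bool)}
    (h : G.IsWalkFrom X a b l) : b ∈ vertexFinset G Finset.univ ∨ a = b := by
  induction h with
  | nil v => exact Or.inr rfl
  | @cons u w s l he h1 hl ih =>
      rcases ih with h | h
      · exact Or.inl h
      · rw [← h]
        cases hb : s.2
        · have h2 : G.stepLast s = G.src s.1 := by simp [GG.stepLast, hb]
          rw [h2]; exact Or.inl (src_mem_VF G s.1)
        · have h2 : G.stepLast s = G.tgt s.1 := by simp [GG.stepLast, hb]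
          rw [h2]; exact Or.inl (tgt_mem_VF G s.1)

lemma vbase_mem_VF (q) : vbase G q ∈ vertexFinset G Finset.univ := src_mem_VF G _

lemma Pcomp_mem_VF {q} {u : V} (h : Pcomp G q u) : u ∈ vertexFinset G Finset.univ := by
  obtain ⟨l, hl⟩ := h
  rcases walk_end_mem_VF G hl with h | h
  · exact h
  · exact h ▸ vbase_mem_VF G q

lemma Pcomp_step {q} {e : E} (h : Pcomp G q (G.src e)) : Pcomp G q (G.tgt e) := by
  obtain ⟨l, hl⟩ := h
  exact ⟨l ++ [(e, true)], walk_append hl (walk_step_fwd G e)⟩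

lemma Pcomp_step' {q} {e : E} (h : Pcomp G q (G.tgt e)) : Pcomp G q (G.src e) := by
  obtain ⟨l, hl⟩ := h
  exact ⟨l ++ [(e, false)], walk_append hl (walk_step_bwd G e)⟩

lemma exists_Pcomp_of_mem_VF {u : V} (h : u ∈ vertexFinset G Finset.univ) :
    ∃ q, Pcomp G q u := by
  rw [vertexFinset, Finset.mem_union] at h
  have key : ∀ e : E, ∃ l, G.IsWalkFrom ↑(Finset.univ : Finset E)
      (vbase G (Quot.mk _ (⟨e, Finset.mem_univ e⟩ : {x // x ∈ (Finset.univ : Finset E)})))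
      (G.src e) l := by
    intro e
    set q := Quot.mk (edgeCompRel G Finset.univ) (⟨e, Finset.mem_univ e⟩ :
      {x // x ∈ (Finset.univ : Finset E)})
    have : Quot.mk (edgeCompRel G Finset.univ) q.out = Quot.mk _ ⟨e, Finset.mem_univ e⟩ := by
      rw [Quot.out_eq]
    have hrel := (quot_mk_eq_iff (G := G) q.out ⟨e, Finset.mem_univ e⟩).mp this
    exact hrel
  rcases h with h | h
  · obtain ⟨e, _, he⟩ := Finset.mem_image.mp h
    exact ⟨_, he ▸ key e⟩
  · obtain ⟨e, _, he⟩ := Finset.mem_image.mp h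
    obtain ⟨l, hl⟩ := key e
    exact ⟨_, he ▸ Pcomp_step G ⟨l, hl⟩⟩

/-- The span-of-images subspace for the component `q`, matching `dRho`'s subspace. -/
noncomputable def Dq (q : Quot (edgeCompRel G (Finset.univ : Finset E))) :
    Submodule 𝔽 (Fin d → 𝔽) :=
  ⨆ γ ∈ (↑(G.walkGroup ψ (edgeCompCl G Finset.univ q.out.1) (G.src q.out.1)) : Set Γ),
    LinearMap.range (LinearMap.id - (ρ γ).toLinearMap)

lemma dRho_eq_finrank_Dq (q) :
    dRho ρ ↑(G.walkGroup ψ (edgeCompCl G Finset.univ q.out.1) (G.src q.out.1)) =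
      Module.finrank 𝔽 ↥(Dq G ρ ψ q) := rfl

lemma closed_gain_mem (q) {u₁ u₂ : V} (h1 : Pcomp G q u₁) (h2 : Pcomp G q u₂)
    {l : List (E × Bool)} (hw : G.IsWalkFrom ↑(Finset.univ : Finset E) u₁ u₂ l) :
    gq G ψ q u₁ * gainOf ψ l * (gq G ψ q u₂)⁻¹ ∈
      G.walkGroup ψ (edgeCompCl G Finset.univ q.out.1) (G.src q.out.1) := by
  obtain ⟨l₁, hl₁, hg₁⟩ := gq_spec G ψ q u₁ h1
  obtain ⟨l₂, hl₂, hg₂⟩ := gq_spec G ψ q u₂ h2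
  have hwalk : G.IsWalkFrom ↑(Finset.univ : Finset E) (vbase G q) (vbase G q)
      (l₁ ++ (l ++ l₂.reverse.map flipStep)) :=
    walk_append hl₁ (walk_append hw (walk_reverse hl₂))
  have hwalk' := walk_comp (e₀ := q.out.1) hwalk ⟨[], .nil _⟩
  apply Subgroup.subset_closure
  refine ⟨_, hwalk', ?_⟩
  rw [gain_append, gain_append, gain_reverse, hg₁, hg₂, mul_assoc]

lemma range_le_Dq (q) {γ : Γ}
    (h : γ ∈ G.walkGroup ψ (edgeCompCl G Finset.univ q.out.1) (G.src q.out.1)) :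
    LinearMap.range (LinearMap.id - (ρ γ).toLinearMap) ≤ Dq G ρ ψ q :=
  le_iSup₂ (f := fun γ _ => LinearMap.range (LinearMap.id - (ρ γ).toLinearMap)) γ h

/-- The stabilizer subgroup of a linear map under the `ρ`-action. -/
def stabG {M : Type*} [AddCommGroup M] [Module 𝔽 M]
    (F : (Fin d → 𝔽) →ₗ[𝔽] M) : Subgroup Γ where
  carrier := {γ | ∀ y, F ((ρ γ) y) = F y}
  one_mem' := by intro y; simp
  mul_mem' := by
    intro a b ha hb y
    rw [map_mul]
    have : (ρ a * ρ b) y = (ρ a) ((ρ b) y) := rfl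
    rw [this, ha, hb]
  inv_mem' := by
    intro a ha y
    have h2 := ha ((ρ a)⁻¹ y)
    have h3 : (ρ a) ((ρ a)⁻¹ y) = y := (ρ a).apply_symm_apply y
    rw [h3] at h2
    rw [map_inv]
    exact h2.symm

lemma mem_stabG_iff {M : Type*} [AddCommGroup M] [Module 𝔽 M]
    (F : (Fin d → 𝔽) →ₗ[𝔽] M) (γ : Γ) :
    γ ∈ stabG ρ F ↔ LinearMap.range (LinearMap.id - (ρ γ).toLinearMap) ≤ LinearMap.ker F := by
  constructor
  · intro h
    rintro z hz
    obtain ⟨y, rfl⟩ := hz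
    have hy := h y
    simp only [LinearMap.mem_ker, LinearMap.sub_apply, LinearMap.id_apply, map_sub,
      LinearEquiv.coe_coe, hy, sub_self]
  · intro h y
    have := h (LinearMap.mem_range_self (LinearMap.id - (ρ γ).toLinearMap) y)
    simp only [LinearMap.mem_ker, LinearMap.sub_apply, LinearMap.id_apply, map_sub,
      LinearEquiv.coe_coe] at this
    have := sub_eq_zero.mp this
    exact this.symm

lemma rho_inv_apply (γ : Γ) (z : Fin d → 𝔽) : (ρ γ) ((ρ γ⁻¹) z) = z := by
  rw [map_inv]; exact (ρ γ).apply_symm_apply z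

lemma mem_Asub_loop_iff {e : E} (he : G.src e = G.tgt e) (x : V → Fin d → 𝔽) :
    x ∈ Asub G ρ ψ e ↔
      x (G.src e) ∈ LinearMap.range (LinearMap.id - (ρ (ψ e)).toLinearMap) ∧
        ∀ v, v ≠ G.src e → x v = 0 := by
  rw [Asub, if_pos he]
  simp only [Submodule.mem_inf, Submodule.mem_comap, Submodule.mem_iInf, LinearMap.mem_ker,
    LinearMap.proj_apply, Set.mem_setOf_eq]

lemma mem_Asub_nonloop_iff {e : E} (he : ¬ G.src e = G.tgt e) (x : V → Fin d → 𝔽) :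
    x ∈ Asub G ρ ψ e ↔
      x (G.src e) + (ρ (ψ e)) (x (G.tgt e)) = 0 ∧
        ∀ v, v ≠ G.src e → v ≠ G.tgt e → x v = 0 := by
  rw [Asub, if_neg he]
  simp only [Submodule.mem_inf, Submodule.mem_iInf, LinearMap.mem_ker, LinearMap.add_apply,
    LinearMap.proj_apply, LinearMap.comp_apply, Set.mem_setOf_eq, LinearEquiv.coe_coe, and_imp]

lemma mem_Asub_gen_nonloop {e : E} (he : ¬ G.src e = G.tgt e) (y : Fin d → 𝔽) :
    (Pi.single (G.tgt e) y - Pi.single (G.src e) ((ρ (ψ e)) y) : V → Fin d → 𝔽) ∈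
      Asub G ρ ψ e := by
  rw [mem_Asub_nonloop_iff G ρ ψ he]
  constructor
  · have e1 : (Pi.single (G.tgt e) y : V → Fin d → 𝔽) (G.src e) = 0 :=
      Pi.single_eq_of_ne (M := fun _ : V => Fin d → 𝔽) he y
    have e4 : (Pi.single (G.src e) ((ρ (ψ e)) y) : V → Fin d → 𝔽) (G.tgt e) = 0 :=
      Pi.single_eq_of_ne (M := fun _ : V => Fin d → 𝔽) (fun h => he h.symm) _
    simp [Pi.sub_apply, e1, e4]
  · intro v hv1 hv2
    simp [Pi.sub_apply, Pi.single_eq_of_ne hv2, Pi.single_eq_of_ne hv1]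

lemma mem_Asub_gen_loop {e : E} (he : G.src e = G.tgt e) (y : Fin d → 𝔽) :
    (Pi.single (G.src e) (y - (ρ (ψ e)) y) : V → Fin d → 𝔽) ∈ Asub G ρ ψ e := by
  rw [mem_Asub_loop_iff G ρ ψ he]
  constructor
  · simp only [Pi.single_eq_same]
    exact ⟨y, rfl⟩
  · intro v hv
    simp [Pi.single_eq_of_ne hv]

/-- Telescoping: moving a single along a walk stays in the span `S`. -/
lemma tele {X : Set E} {a b : V} {l : List (E × Bool)}
    (h : G.IsWalkFrom X a b l) (y : Fin d → 𝔽) :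
    (Pi.single b y - Pi.single a ((ρ (gainOf ψ l)) y) : V → Fin d → 𝔽) ∈
      ⨆ e : E, Asub G ρ ψ e := by
  induction h generalizing y with
  | nil v => simp [GG.gainOf]
  | @cons u w s l he h1 hl ih =>
    have step : (Pi.single (G.stepLast s) ((ρ (gainOf ψ l)) y) -
        Pi.single u ((ρ (gainOf ψ (s :: l))) y) : V → Fin d → 𝔽) ∈ ⨆ e : E, Asub G ρ ψ e := by
      rw [← h1]
      have hg : (ρ (gainOf ψ (s :: l))) y =
          (ρ (if s.2 then ψ s.1 else (ψ s.1)⁻¹)) ((ρ (gainOf ψ l)) y) := by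
        show (ρ _) y = _
        rw [GG.gainOf, map_mul]
        rfl
      rw [hg]
      set z := (ρ (gainOf ψ l)) y with hz
      -- goal: single (stepLast s) z - single (stepHead s) (ρ h_s z) ∈ S
      cases hb : s.2
      · -- backward step: head = tgt, last = src
        have hh : G.stepHead s = G.tgt s.1 := by simp [GG.stepHead, hb]
        have hl' : G.stepLast s = G.src s.1 := by simp [GG.stepLast, hb]
        have hif : (if (false : Bool) = true then ψ s.1 else (ψ s.1)⁻¹) = (ψ s.1)⁻¹ := by simp
        rw [hh, hl', hif]
        by_cases hloop : G.src s.1 = G.tgt s.1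
        · rw [← hloop]
          have hmem := mem_Asub_gen_loop G ρ ψ hloop (-((ρ ((ψ s.1)⁻¹)) z))
          have hval : -((ρ ((ψ s.1)⁻¹)) z) - (ρ (ψ s.1)) (-((ρ ((ψ s.1)⁻¹)) z)) =
              z - (ρ ((ψ s.1)⁻¹)) z := by
            rw [map_neg, rho_inv_apply ρ]; abel
          rw [hval, Pi.single_sub] at hmem
          exact Submodule.mem_iSup_of_mem s.1 hmem
        · have hmem := mem_Asub_gen_nonloop G ρ ψ hloop ((ρ ((ψ s.1)⁻¹)) z)
          have hval : (ρ (ψ s.1)) ((ρ ((ψ s.1)⁻¹)) z) = z := rho_inv_apply ρ (ψ s.1) z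
          rw [hval] at hmem
          have := neg_mem hmem
          simpa using (Submodule.mem_iSup_of_mem s.1 this : _)
      · -- forward step: head = src, last = tgt
        have hh : G.stepHead s = G.src s.1 := by simp [GG.stepHead, hb]
        have hl' : G.stepLast s = G.tgt s.1 := by simp [GG.stepLast, hb]
        have hif : (if (true : Bool) = true then ψ s.1 else (ψ s.1)⁻¹) = ψ s.1 := by simp
        rw [hh, hl', hif]
        by_cases hloop : G.src s.1 = G.tgt s.1
        · rw [← hloop]
          have hmem := mem_Asub_gen_loop G ρ ψ hloop z
          rw [Pi.single_sub] at hmem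
          exact Submodule.mem_iSup_of_mem s.1 hmem
        · exact Submodule.mem_iSup_of_mem s.1 (mem_Asub_gen_nonloop G ρ ψ hloop z)
    have total := add_mem (ih y) step
    have : (Pi.single w y - Pi.single u ((ρ (gainOf ψ (s :: l))) y) : V → Fin d → 𝔽) =
        (Pi.single w y - Pi.single (G.stepLast s) ((ρ (gainOf ψ l)) y)) +
          (Pi.single (G.stepLast s) ((ρ (gainOf ψ l)) y) -
            Pi.single u ((ρ (gainOf ψ (s :: l))) y)) := by abel
    rwa [← this] at total

lemma rho_mul_apply (a b : Γ) (z : Fin d → 𝔽) : (ρ (a * b)) z = (ρ a) ((ρ b) z) := by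
  rw [map_mul]; rfl

open Classical in
/-- Coefficient map: `ρ` of the chosen path gain if `u` is in component `q`, else `0`. -/
noncomputable def cced (q : Quot (edgeCompRel G (Finset.univ : Finset E))) (u : V) :
    (Fin d → 𝔽) →ₗ[𝔽] (Fin d → 𝔽) :=
  if Pcomp G q u then (ρ (gq G ψ q u)).toLinearMap else 0

lemma cced_pos {q} {u : V} (h : Pcomp G q u) :
    cced G ρ ψ q u = (ρ (gq G ψ q u)).toLinearMap := by rw [cced, if_pos h]

lemma cced_neg {q} {u : V} (h : ¬ Pcomp G q u) : cced G ρ ψ q u = 0 := by rw [cced, if_neg h]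

/-- The second block of the test map: component sums, modulo `Dq`. -/
noncomputable def Psi2 (q : Quot (edgeCompRel G (Finset.univ : Finset E))) :
    (V → Fin d → 𝔽) →ₗ[𝔽] ((Fin d → 𝔽) ⧸ Dq G ρ ψ q) :=
  (Dq G ρ ψ q).mkQ ∘ₗ ∑ u : V, cced G ρ ψ q u ∘ₗ LinearMap.proj u

lemma Psi2_apply (q) (x : V → Fin d → 𝔽) :
    Psi2 G ρ ψ q x = (Dq G ρ ψ q).mkQ (∑ u : V, cced G ρ ψ q u (x u)) := by
  simp [Psi2, LinearMap.sum_apply]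

/-- The first block: coordinates away from the vertex set. -/
noncomputable def Psi1 :
    (V → Fin d → 𝔽) →ₗ[𝔽] ({u : V // u ∉ vertexFinset G Finset.univ} → (Fin d → 𝔽)) :=
  LinearMap.pi fun u => LinearMap.proj u.1

/-- The full test map whose kernel is the span of the `Asub`s. -/
noncomputable def Psi :
    (V → Fin d → 𝔽) →ₗ[𝔽]
      ({u : V // u ∉ vertexFinset G Finset.univ} → (Fin d → 𝔽)) ×
        ((q : Quot (edgeCompRel G (Finset.univ : Finset E))) → ((Fin d → 𝔽) ⧸ Dq G ρ ψ q)) :=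
  (Psi1 G).prod (LinearMap.pi (Psi2 G ρ ψ))

lemma span_le_ker : (⨆ e : E, Asub G ρ ψ e) ≤ LinearMap.ker (Psi G ρ ψ) := by
  refine iSup_le fun e => fun x hx => ?_
  have hoff : ∀ v, v ≠ G.src e → v ≠ G.tgt e → x v = 0 := by
    by_cases hloop : G.src e = G.tgt e
    · intro v hv _; exact ((mem_Asub_loop_iff G ρ ψ hloop x).mp hx).2 v hv
    · intro v hv hv'; exact ((mem_Asub_nonloop_iff G ρ ψ hloop x).mp hx).2 v hv hv'
  rw [LinearMap.mem_ker]
  rw [Prod.ext_iff]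
  constructor
  · funext u
    exact hoff u.1 (fun h => u.2 (h ▸ src_mem_VF G e)) (fun h => u.2 (h ▸ tgt_mem_VF G e))
  · funext q
    show Psi2 G ρ ψ q x = 0
    rw [Psi2_apply]
    have hsupp : ∀ u : V, u ∉ ({G.src e, G.tgt e} : Finset V) → cced G ρ ψ q u (x u) = 0 := by
      intro u hu
      simp only [Finset.mem_insert, Finset.mem_singleton] at hu
      push_neg at hu
      rw [hoff u hu.1 hu.2]
      exact map_zero _
    have hsum : (∑ u : V, cced G ρ ψ q u (x u)) =
        ∑ u ∈ ({G.src e, G.tgt e} : Finset V), cced G ρ ψ q u (x u) :=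
      (Finset.sum_subset (Finset.subset_univ _) (fun u _ hu => hsupp u hu)).symm
    rw [hsum, Submodule.mkQ_apply, Submodule.Quotient.mk_eq_zero]
    by_cases hP : Pcomp G q (G.src e)
    · have hPt : Pcomp G q (G.tgt e) := Pcomp_step G hP
      by_cases hloop : G.src e = G.tgt e
      · -- loop case
        obtain ⟨hr, _⟩ := (mem_Asub_loop_iff G ρ ψ hloop x).mp hx
        obtain ⟨y, hy⟩ := hr
        have hy' : x (G.src e) = y - (ρ (ψ e)) y := by
          rw [← hy]; simp
        have hpair : ({G.src e, G.tgt e} : Finset V) = {G.src e} := by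
          rw [← hloop]; simp
        rw [hpair, Finset.sum_singleton, cced_pos G ρ ψ hP, hy']
        set g := gq G ψ q (G.src e)
        have hγ : g * ψ e * g⁻¹ ∈
            G.walkGroup ψ (edgeCompCl G Finset.univ q.out.1) (G.src q.out.1) := by
          have hw : G.IsWalkFrom ↑(Finset.univ : Finset E) (G.src e) (G.src e) [(e, true)] := by
            have := walk_step_fwd G e
            rwa [← hloop] at this
          have := closed_gain_mem G ψ q hP hP hw
          have hg : gainOf ψ [(e, true)] = ψ e := by simp [GG.gainOf]
          rwa [hg] at this
        refine range_le_Dq G ρ ψ q hγ ⟨(ρ g) y, ?_⟩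
        show (ρ g) y - (ρ (g * ψ e * g⁻¹)) ((ρ g) y) = _
        rw [← rho_mul_apply]
        have : g * ψ e * g⁻¹ * g = g * ψ e := by group
        rw [this, rho_mul_apply, map_sub]
        simp only [LinearEquiv.coe_coe]
      · -- non-loop case
        obtain ⟨hr, _⟩ := (mem_Asub_nonloop_iff G ρ ψ hloop x).mp hx
        set y := x (G.tgt e) with hyd
        have hxsrc : x (G.src e) = -((ρ (ψ e)) y) := by
          have := hr
          linear_combination (norm := module) this
        rw [Finset.sum_pair hloop, cced_pos G ρ ψ hP, cced_pos G ρ ψ hPt, hxsrc]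
        set gs := gq G ψ q (G.src e)
        set gt := gq G ψ q (G.tgt e)
        have hγ : gs * ψ e * gt⁻¹ ∈
            G.walkGroup ψ (edgeCompCl G Finset.univ q.out.1) (G.src q.out.1) := by
          have := closed_gain_mem G ψ q hP hPt (walk_step_fwd G e)
          have hg : gainOf ψ [(e, true)] = ψ e := by simp [GG.gainOf]
          rwa [hg] at this
        refine range_le_Dq G ρ ψ q hγ ⟨(ρ gt) y, ?_⟩
        show (ρ gt) y - (ρ (gs * ψ e * gt⁻¹)) ((ρ gt) y) = _
        rw [← rho_mul_apply]
        have : gs * ψ e * gt⁻¹ * gt = gs * ψ e := by group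
        rw [this, rho_mul_apply, map_neg]
        simp only [LinearEquiv.coe_coe, ← hyd]
        abel
    · -- base vertex not in this component: all coefficients vanish
      have hPt : ¬ Pcomp G q (G.tgt e) := fun h => hP (Pcomp_step' G h)
      have : ∀ u ∈ ({G.src e, G.tgt e} : Finset V), cced G ρ ψ q u (x u) = 0 := by
        intro u hu
        simp only [Finset.mem_insert, Finset.mem_singleton] at hu
        rcases hu with rfl | rfl
        · rw [cced_neg G ρ ψ hP]; rfl
        · rw [cced_neg G ρ ψ hPt]; rfl
      rw [Finset.sum_eq_zero this]
      exact zero_mem _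

lemma mkQ_single_eq (q) {u : V} (h : Pcomp G q u) (y : Fin d → 𝔽) :
    (⨆ e : E, Asub G ρ ψ e).mkQ (Pi.single u y) =
      (⨆ e : E, Asub G ρ ψ e).mkQ (Pi.single (vbase G q) ((ρ (gq G ψ q u)) y)) := by
  obtain ⟨l, hl, hg⟩ := gq_spec G ψ q u h
  have := tele G ρ ψ hl y
  rw [hg] at this
  rw [Submodule.mkQ_apply, Submodule.mkQ_apply]
  exact (Submodule.Quotient.eq _).mpr this

lemma mkQ_single_Dq_eq_zero (q) {z : Fin d → 𝔽} (hz : z ∈ Dq G ρ ψ q) :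
    (⨆ e : E, Asub G ρ ψ e).mkQ (Pi.single (vbase G q) z) = 0 := by
  set S := ⨆ e : E, Asub G ρ ψ e with hS
  set F := S.mkQ ∘ₗ LinearMap.single 𝔽 (fun _ : V => Fin d → 𝔽) (vbase G q) with hF
  have hstab : G.walkGroup ψ (edgeCompCl G Finset.univ q.out.1) (G.src q.out.1) ≤
      stabG ρ F := by
    rw [GG.walkGroup]
    rw [Subgroup.closure_le]
    rintro γ ⟨l, hw, rfl⟩
    intro y
    show S.mkQ (Pi.single (vbase G q) ((ρ (gainOf ψ l)) y)) =
      S.mkQ (Pi.single (vbase G q) y)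
    have := tele G ρ ψ hw y
    rw [Submodule.mkQ_apply, Submodule.mkQ_apply]
    exact ((Submodule.Quotient.eq _).mpr this).symm
  have hDle : Dq G ρ ψ q ≤ LinearMap.ker F := by
    refine iSup_le fun γ => iSup_le fun hγ => ?_
    exact (mem_stabG_iff ρ F γ).mp (hstab hγ)
  exact hDle hz

lemma ker_le_span : LinearMap.ker (Psi G ρ ψ) ≤ ⨆ e : E, Asub G ρ ψ e := by
  classical
  haveI : Fintype (Quot (edgeCompRel G (Finset.univ : Finset E))) := Fintype.ofFinite _
  intro x hx
  rw [LinearMap.mem_ker, Prod.ext_iff] at hx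
  obtain ⟨h1, h2⟩ := hx
  have hoff : ∀ u : V, u ∉ vertexFinset G Finset.univ → x u = 0 := by
    intro u hu
    have := congrFun h1 ⟨u, hu⟩
    simpa [Psi, Psi1] using this
  have hcomp : ∀ q, (∑ u : V, cced G ρ ψ q u (x u)) ∈ Dq G ρ ψ q := by
    intro q
    have := congrFun h2 q
    have h3 : Psi2 G ρ ψ q x = 0 := by simpa [Psi] using this
    rw [Psi2_apply, Submodule.mkQ_apply, Submodule.Quotient.mk_eq_zero] at h3
    exact h3
  set S := ⨆ e : E, Asub G ρ ψ e with hS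
  have hgoal : S.mkQ x = 0 := by
    have hx_decomp : x = ∑ u : V, Pi.single u (x u) := (Finset.univ_sum_single x).symm
    rw [hx_decomp, map_sum]
    have hterm : ∀ u : V, S.mkQ (Pi.single u (x u)) =
        ∑ q, S.mkQ (Pi.single (vbase G q) (cced G ρ ψ q u (x u))) := by
      intro u
      by_cases hq : ∃ q, Pcomp G q u
      · obtain ⟨q0, h0⟩ := hq
        rw [Finset.sum_eq_single q0]
        · rw [cced_pos G ρ ψ h0]
          exact mkQ_single_eq G ρ ψ q0 h0 (x u)
        · intro q _ hne
          have hnP : ¬ Pcomp G q u := fun h => hne (Pcomp_unique G h h0)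
          rw [cced_neg G ρ ψ hnP]
          simp
        · intro h; exact absurd (Finset.mem_univ q0) h
      · push_neg at hq
        have hu : u ∉ vertexFinset G Finset.univ := by
          intro h
          obtain ⟨q, hqq⟩ := exists_Pcomp_of_mem_VF G h
          exact (hq q) hqq
        rw [hoff u hu]
        simp
    rw [Finset.sum_congr rfl (fun u _ => hterm u)]
    rw [Finset.sum_comm]
    have : ∀ q, (∑ u : V, S.mkQ (Pi.single (vbase G q) (cced G ρ ψ q u (x u)))) = 0 := by
      intro q
      have hsing : (∑ u : V, S.mkQ (Pi.single (vbase G q) (cced G ρ ψ q u (x u)))) =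
          S.mkQ (Pi.single (vbase G q) (∑ u : V, cced G ρ ψ q u (x u))) := by
        have key := map_sum (S.mkQ ∘ₗ LinearMap.single 𝔽 (fun _ : V => Fin d → 𝔽) (vbase G q))
          (fun u => cced G ρ ψ q u (x u)) Finset.univ
        simp only [LinearMap.comp_apply, LinearMap.coe_single] at key
        exact key.symm
      rw [hsing]
      exact mkQ_single_Dq_eq_zero G ρ ψ q (hcomp q)
    rw [Finset.sum_congr rfl (fun q _ => this q), Finset.sum_const_zero]
  rwa [Submodule.mkQ_apply, Submodule.Quotient.mk_eq_zero] at hgoal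

lemma Psi_surjective : Function.Surjective (Psi G ρ ψ) := by
  classical
  haveI : Fintype (Quot (edgeCompRel G (Finset.univ : Finset E))) := Fintype.ofFinite _
  rintro ⟨a, b⟩
  have hyq : ∀ q, ∃ y, (Dq G ρ ψ q).mkQ y = b q := fun q =>
    Submodule.mkQ_surjective _ (b q)
  choose yq hyq using hyq
  set z : (q : Quot (edgeCompRel G (Finset.univ : Finset E))) → (Fin d → 𝔽) :=
    fun q => (ρ (gq G ψ q (vbase G q))⁻¹) (yq q) with hz
  set x₁ : V → Fin d → 𝔽 :=
    fun u => if h : u ∈ vertexFinset G Finset.univ then 0 else a ⟨u, h⟩ with hx₁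
  set x : V → Fin d → 𝔽 :=
    x₁ + ∑ q, (Pi.single (vbase G q) (z q) : V → Fin d → 𝔽) with hx
  refine ⟨x, ?_⟩
  have hxval : ∀ (u : V) (hu : u ∉ vertexFinset G Finset.univ), x u = a ⟨u, hu⟩ := by
    intro u hu
    rw [hx]
    simp only [Pi.add_apply, Finset.sum_apply]
    have h1 : x₁ u = a ⟨u, hu⟩ := by rw [hx₁]; simp [dif_neg hu]
    have h2 : ∀ q, (Pi.single (vbase G q) (z q) : V → Fin d → 𝔽) u = 0 := by
      intro q
      have : u ≠ vbase G q := fun h => hu (h ▸ vbase_mem_VF G q)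
      exact Pi.single_eq_of_ne (M := fun _ : V => Fin d → 𝔽) this _
    rw [h1, Finset.sum_congr rfl (fun q _ => h2 q), Finset.sum_const_zero, add_zero]
  rw [Prod.ext_iff]
  constructor
  · -- first component
    funext u
    show x u.1 = a u
    rw [hxval u.1 u.2]
  · -- second component
    funext q
    show Psi2 G ρ ψ q x = b q
    rw [Psi2_apply]
    have hsum : (∑ u : V, cced G ρ ψ q u (x u)) = yq q := by
      have hsplit : ∀ u : V, cced G ρ ψ q u (x u) =
          cced G ρ ψ q u (x₁ u) +
            ∑ q', cced G ρ ψ q u ((Pi.single (vbase G q') (z q') : V → Fin d → 𝔽) u) := by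
        intro u
        rw [hx]
        simp only [Pi.add_apply, Finset.sum_apply, map_add, map_sum]
      rw [Finset.sum_congr rfl (fun u _ => hsplit u), Finset.sum_add_distrib]
      have hfirst : (∑ u : V, cced G ρ ψ q u (x₁ u)) = 0 := by
        refine Finset.sum_eq_zero fun u _ => ?_
        by_cases hP : Pcomp G q u
        · have hu : u ∈ vertexFinset G Finset.univ := Pcomp_mem_VF G hP
          have : x₁ u = 0 := by rw [hx₁]; simp [dif_pos hu]
          rw [this, map_zero]
        · rw [cced_neg G ρ ψ hP]; rfl
      rw [hfirst, zero_add, Finset.sum_comm]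
      have hinner : ∀ q',
          (∑ u : V, cced G ρ ψ q u ((Pi.single (vbase G q') (z q') : V → Fin d → 𝔽) u)) =
          cced G ρ ψ q (vbase G q') (z q') := by
        intro q'
        rw [Finset.sum_eq_single (vbase G q')]
        · rw [Pi.single_eq_same]
        · intro u _ hne
          rw [Pi.single_eq_of_ne (M := fun _ : V => Fin d → 𝔽) hne, map_zero]
        · intro h; exact absurd (Finset.mem_univ _) h
      rw [Finset.sum_congr rfl (fun q' _ => hinner q')]
      rw [Finset.sum_eq_single q]
      · rw [cced_pos G ρ ψ (Pcomp_base G q)]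
        exact rho_inv_apply ρ _ _
      · intro q' _ hne
        have hnP : ¬ Pcomp G q (vbase G q') := fun h =>
          hne (Pcomp_unique G (Pcomp_base G q') h)
        rw [cced_neg G ρ ψ hnP]; rfl
      · intro h; exact absurd (Finset.mem_univ _) h
    rw [hsum]
    exact hyq q

end Main

/-- Theorem 5.3 (with `F = E`): the span of the canonical subspaces `A_{e,ψ}` has
dimension `d|V(E)| − d·c(E) + Σ_{X ∈ C(E)} d_ρ(⟨X⟩)`, where the sum runs over the
connected components of the edge set, each evaluated at a base vertex. -/
theorem dim_Asub_eq (G : GG V E)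
    (ρ : Γ →* ((Fin d → 𝔽) ≃ₗ[𝔽] (Fin d → 𝔽))) (ψ : E → Γ) :
    (Module.finrank 𝔽 ↥(⨆ e : E, Asub G ρ ψ e) : ℤ) =
      d * (vertexFinset G Finset.univ).card - d * edgeNumComp G Finset.univ +
        ∑ᶠ q : Quot (edgeCompRel G (Finset.univ : Finset E)),
          (dRho ρ ↑(G.walkGroup ψ (edgeCompCl G Finset.univ q.out.1) (G.src q.out.1)) : ℤ) := by
  classical
  haveI : Fintype (Quot (edgeCompRel G (Finset.univ : Finset E))) := Fintype.ofFinite _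
  have hker : LinearMap.ker (Psi G ρ ψ) = ⨆ e : E, Asub G ρ ψ e :=
    le_antisymm (ker_le_span G ρ ψ) (span_le_ker G ρ ψ)
  have hrange : LinearMap.range (Psi G ρ ψ) = ⊤ :=
    LinearMap.range_eq_top.mpr (Psi_surjective G ρ ψ)
  have hrank := LinearMap.finrank_range_add_finrank_ker (Psi G ρ ψ)
  rw [hker, hrange, finrank_top] at hrank
  have hLd : Module.finrank 𝔽 (Fin d → 𝔽) = d := by
    rw [Module.finrank_fintype_fun_eq_card, Fintype.card_fin]
  have hdom : Module.finrank 𝔽 (V → Fin d → 𝔽) = Fintype.card V * d := by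
    rw [Module.finrank_pi_fintype]
    simp [hLd, Finset.sum_const, Finset.card_univ, smul_eq_mul]
  have hp1 : Module.finrank 𝔽 ({u : V // u ∉ vertexFinset G Finset.univ} → (Fin d → 𝔽)) =
      (Fintype.card V - (vertexFinset G Finset.univ).card) * d := by
    rw [Module.finrank_pi_fintype]
    simp only [hLd, Finset.sum_const, Finset.card_univ, smul_eq_mul]
    congr 1
    rw [Fintype.card_subtype_compl, Fintype.card_coe]
  have hp2 : Module.finrank 𝔽
      ((q : Quot (edgeCompRel G (Finset.univ : Finset E))) → ((Fin d → 𝔽) ⧸ Dq G ρ ψ q)) =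
      ∑ q, Module.finrank 𝔽 ((Fin d → 𝔽) ⧸ Dq G ρ ψ q) := Module.finrank_pi_fintype 𝔽
  have hcod : Module.finrank 𝔽 (({u : V // u ∉ vertexFinset G Finset.univ} → (Fin d → 𝔽)) ×
      ((q : Quot (edgeCompRel G (Finset.univ : Finset E))) → ((Fin d → 𝔽) ⧸ Dq G ρ ψ q))) =
      (Fintype.card V - (vertexFinset G Finset.univ).card) * d +
        ∑ q, Module.finrank 𝔽 ((Fin d → 𝔽) ⧸ Dq G ρ ψ q) := by
    rw [Module.finrank_prod, hp1, hp2]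
  rw [hdom, hcod] at hrank
  have hquot : ∀ q, Module.finrank 𝔽 ((Fin d → 𝔽) ⧸ Dq G ρ ψ q) +
      Module.finrank 𝔽 ↥(Dq G ρ ψ q) = d := by
    intro q
    have := Submodule.finrank_quotient_add_finrank (Dq G ρ ψ q)
    rwa [hLd] at this
  have hc : edgeNumComp G (Finset.univ : Finset E) =
      Fintype.card (Quot (edgeCompRel G (Finset.univ : Finset E))) := Nat.card_eq_fintype_card
  rw [finsum_eq_sum_of_fintype, hc]
  have hdR : ∀ q, dRho ρ
      (↑(G.walkGroup ψ (edgeCompCl G Finset.univ q.out.1) (G.src q.out.1)) : Set Γ) =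
      Module.finrank 𝔽 ↥(Dq G ρ ψ q) := fun q => rfl
  simp only [hdR]
  have hm_le : (vertexFinset G Finset.univ).card ≤ Fintype.card V := Finset.card_le_univ _
  -- cast everything to ℤ
  have hZ := congrArg (Nat.cast : ℕ → ℤ) hrank
  push_cast [Nat.cast_sub hm_le] at hZ
  have hfq : ∀ q, (Module.finrank 𝔽 ((Fin d → 𝔽) ⧸ Dq G ρ ψ q) : ℤ) =
      (d : ℤ) - (Module.finrank 𝔽 ↥(Dq G ρ ψ q) : ℤ) := by
    intro q
    have := hquot q
    omega
  have hsumZ : (∑ q, (Module.finrank 𝔽 ((Fin d → 𝔽) ⧸ Dq G ρ ψ q) : ℤ)) =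
      (Fintype.card (Quot (edgeCompRel G (Finset.univ : Finset E))) : ℤ) * d -
        ∑ q, (Module.finrank 𝔽 ↥(Dq G ρ ψ q) : ℤ) := by
    rw [Finset.sum_congr rfl (fun q _ => hfq q), Finset.sum_sub_distrib, Finset.sum_const,
      Finset.card_univ, nsmul_eq_mul]
  linarith [hZ, hsumZ]
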